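/- Let (G, ℓ : V(G) → Σ, C₀, F₀ ⊆ Σ²) be a regular antichain and let r ≥ 3. Then the associated directed graph H^r contains a spanning path: a directed path that starts at a vertex of V(G) × {1}, ends at a vertex of V(G) × {r}, and contains at least one vertex of V(G) × {i} for every i ∈ {1,…,r}. -/

import Mathlib

namespace P2601

/-- A relation is a well-quasi-ordering if every infinite sequence admits
`i < j` with `f i ≤ f j`. -/
def IsWqo {X : Type*} (le : X → X → Prop) : Prop :=
  ∀ f : ℕ → X, ∃ i j : ℕ, i < j ∧ le (f i) (f j)

/-- Finite rooted ordered binary trees with edge labels in `α`: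
a node carries the labels of its left and right edges. -/
inductive BT (α : Type) : Type
  | leaf : BT α
  | node : α → BT α → α → BT α → BT α

namespace BT
variable {α : Type}

/-- Nodes of a tree, encoded as lists of directions from the root
(`false` = left, `true` = right). -/
def valid : BT α → List Bool → Prop
  | _, [] => True
  | .leaf, _ :: _ => False
  | .node _ l _ _, false :: p => valid l p
  | .node _ _ _ r, true :: p => valid r p

/-- Subtree rooted at a position. -/
def sub : BT α → List Bool → BT α
  | t, [] => t
  | .leaf, _ :: _ => .leaf
  | .node _ l _ _, false :: p => sub l p
  | .node _ _ _ r, true :: p => sub r p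

/-- Leaf positions. -/
def IsLeafPos (t : BT α) (p : List Bool) : Prop := t.valid p ∧ t.sub p = .leaf

/-- Product (in `M`, through the morphism determined by `μ`) of the edge
labels read along the downward path `p`. -/
def prodW {M : Type} [Monoid M] (μ : α → M) : BT α → List Bool → M
  | _, [] => 1
  | .leaf, _ :: _ => 1
  | .node a l _ _, false :: p => μ a * prodW μ l p
  | .node _ _ c r, true :: p => μ c * prodW μ r p

/-- A linear tree: every internal node has at most one non-leaf child. -/
def IsLinear : BT α → Prop
  | .leaf => True
  | .node _ l _ r => (l = .leaf ∧ IsLinear r) ∨ (r = .leaf ∧ IsLinear l)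

end BT

/-- `π_T(x,y)`: the product of the edge labels (through `μ`) along the
downward path from the node `x` to its descendant `y`. -/
def pi {α M : Type} [Monoid M] (μ : α → M) (t : BT α) (x y : List Bool) : M :=
  BT.prodW μ (t.sub x) (y.drop x.length)

/-- Strict ancestor relation on positions (strict prefix). -/
def SP (x y : List Bool) : Prop := x <+: y ∧ x ≠ y

/-- Longest common prefix: the least common ancestor of two nodes. -/
def lcp : List Bool → List Bool → List Bool
  | a :: x, b :: y => if a = b then a :: lcp x y else []
  | _, _ => []

/-- `x` lies strictly to the left of `y` in the sibling (left-to-right) order. -/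
def LeftOf (x y : List Bool) : Prop :=
  ∃ p : List Bool, (p ++ [false]) <+: x ∧ (p ++ [true]) <+: y

/-- `σ(x:y)`: the minimum split value of the nodes strictly between `x` and its
strict descendant `y`, and `N+1` if there is no such node. -/
def gap (N : ℕ) (σ : List Bool → ℕ) (x y : List Bool) : ℕ :=
  if h : (Finset.Ioo x.length y.length).Nonempty then
    (Finset.Ioo x.length y.length).inf' h (fun k => σ (y.take k))
  else N + 1

/-- A split of height `N`: every node receives a value in `{1,…,N}`. -/
def IsSplit {α : Type} (N : ℕ) (t : BT α) (σ : List Bool → ℕ) : Prop :=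
  ∀ p, t.valid p → 1 ≤ σ p ∧ σ p ≤ N

/-- `x` and `y` are `k`-neighbours: both have split value `k`, they are on a
common branch, and the split values strictly between them are `≥ k`. -/
def KNbr (N : ℕ) (σ : List Bool → ℕ) (k : ℕ) (x y : List Bool) : Prop :=
  σ x = k ∧ σ y = k ∧
    (x = y ∨ (SP x y ∧ k ≤ gap N σ x y) ∨ (SP y x ∧ k ≤ gap N σ y x))

/-- Forward Ramseyan split. -/
def FR {α M : Type} [Monoid M] (μ : α → M) (N : ℕ) (t : BT α)
    (σ : List Bool → ℕ) : Prop :=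
  ∀ k, 1 ≤ k → k ≤ N → ∀ x y x' y' : List Bool,
    t.valid x → t.valid y → t.valid x' → t.valid y' →
    KNbr N σ k x y → KNbr N σ k x x' → KNbr N σ k x y' →
    KNbr N σ k y x' → KNbr N σ k y y' → KNbr N σ k x' y' →
    SP x y → SP x' y' →
    pi μ t x y = pi μ t x y * pi μ t x' y'

/-- Gap-embedding between trees with splits: a tree embedding (preserving the
ancestor relation, least common ancestors and the sibling order) satisfying the
root gap property and the edge gap property. -/
def IsGapEmb {α β : Type} (N : ℕ) (t₁ : BT α) (σ₁ : List Bool → ℕ)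
    (t₂ : BT β) (σ₂ : List Bool → ℕ) (h : List Bool → List Bool) : Prop :=
  (∀ p, t₁.valid p → t₂.valid (h p)) ∧
  (∀ p q, t₁.valid p → t₁.valid q → h p = h q → p = q) ∧
  (∀ p q, t₁.valid p → t₁.valid q → SP p q → SP (h p) (h q)) ∧
  (∀ p q, t₁.valid p → t₁.valid q → h (lcp p q) = lcp (h p) (h q)) ∧
  (∀ p q, t₁.valid p → t₁.valid q → LeftOf p q → LeftOf (h p) (h q)) ∧
  σ₁ [] ≤ gap N σ₂ [] (h []) ∧
  (∀ p b, t₁.valid (p ++ [b]) → σ₁ (p ++ [b]) ≤ gap N σ₂ (h p) (h (p ++ [b])))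

/-- Markings of nodes. -/
inductive Mark : Type
  | marked | separating | dummy
deriving DecidableEq

/-- Well-marked nested tree condition. -/
def WellMarked {α : Type} (N : ℕ) (t : BT α) (σ : List Bool → ℕ)
    (ρ : List Bool → Mark) : Prop :=
  ρ [] = .marked ∧
  (∀ p q, t.valid p → t.valid q → ρ p = .marked → ρ q = .marked →
    ρ (lcp p q) = .marked) ∧
  (∀ k, 1 ≤ k → k ≤ N → ∀ x y z₁, t.valid x → t.valid y → t.valid z₁ →
    ρ x = .marked → ρ y = .marked → SP x z₁ → SP z₁ y →
    k < gap N σ x z₁ → σ z₁ = k → k ≤ gap N σ z₁ y →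
    ∃ z₂ z₃, t.valid z₂ ∧ t.valid z₃ ∧ SP z₁ z₂ ∧ z₂ <+: z₃ ∧ z₃ <+: y ∧
      σ z₂ = k ∧ σ z₃ = k ∧ k < gap N σ z₁ z₂ ∧ k ≤ gap N σ z₂ z₃ ∧
      k ≤ gap N σ z₃ y ∧ ρ z₁ = .marked ∧
      (ρ z₂ = .marked ∨ ρ z₂ = .separating))

/-- `z` is the closest ancestor of `x` having split value `k`. -/
def ClosestAnc (σ : List Bool → ℕ) (k : ℕ) (x z : List Bool) : Prop :=
  z <+: x ∧ σ z = k ∧ ∀ w, w <+: x → σ w = k → w <+: z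

/-- Marked gap-embedding between marked nested trees. -/
def IsMarkedGapEmb {M : Type} [Monoid M] (N : ℕ)
    (t₁ : BT M) (σ₁ : List Bool → ℕ) (ρ₁ : List Bool → Mark)
    (t₂ : BT M) (σ₂ : List Bool → ℕ) (ρ₂ : List Bool → Mark)
    (h : List Bool → List Bool) : Prop :=
  IsGapEmb N t₁ σ₁ t₂ σ₂ h ∧
  -- sends the root to the root
  h [] = [] ∧
  -- maps leaves to leaves
  (∀ p, t₁.IsLeafPos p → t₂.IsLeafPos (h p)) ∧
  -- respects the marking
  (∀ p, t₁.valid p → ρ₁ p = ρ₂ (h p)) ∧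
  -- respects local products
  (∀ p b, t₁.valid (p ++ [b]) → t₂.valid (h p ++ [b]) →
    pi id t₁ p (p ++ [b]) = pi id t₂ (h p) (h p ++ [b])) ∧
  -- respects neighbourhood products
  (∀ k, 1 ≤ k → k ≤ N → ∀ x z z', t₁.valid x →
    ClosestAnc σ₁ k x z → ClosestAnc σ₂ k (h x) z' →
    pi id t₁ z x = pi id t₂ z' (h x)) ∧
  -- gluing on non-dummy nodes
  (∀ p b, t₁.valid (p ++ [b]) → ρ₁ (p ++ [b]) ≠ .dummy →
    ∃ b', h (p ++ [b]) = h p ++ [b'])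

/-- `L`-bounded marked nested tree: every path of consecutive non-dummy nodes
has length at most `L`. -/
def LBounded {α : Type} (L : ℕ) (t : BT α) (ρ : List Bool → Mark) : Prop :=
  ∀ p q : List Bool, t.valid (p ++ q) →
    (∀ i, i ≤ q.length → ρ (p ++ q.take i) ≠ .dummy) → q.length ≤ L

/-- The edge relation of the graph interpreted from a tree by the monoid
interpretation determined by `μ` and `P ⊆ M³`. -/
def IPEdge {α M : Type} [Monoid M] (μ : α → M) (P : Set (M × M × M))
    (t : BT α) (x y : List Bool) : Prop :=
  (LeftOf x y ∧ (pi μ t [] (lcp x y), pi μ t (lcp x y) x, pi μ t (lcp x y) y) ∈ P) ∨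
  (LeftOf y x ∧ (pi μ t [] (lcp y x), pi μ t (lcp y x) y, pi μ t (lcp y x) x) ∈ P)

/-- One-hole contexts of binary trees (used to represent boughs: a bough is the
tree fragment between `b₀` and `b_n`, the hole being placed below `b_n`). -/
inductive CT (α : Type) : Type
  | hole : CT α
  | nodeL : α → CT α → α → BT α → CT α
  | nodeR : α → BT α → α → CT α → CT α

namespace CT
variable {α : Type}

/-- Position of the hole. -/
def holePos : CT α → List Bool
  | .hole => []
  | .nodeL _ c _ _ => false :: c.holePos
  | .nodeR _ _ _ c => true :: c.holePos

/-- Plugging a tree into the hole. -/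
def plug : CT α → BT α → BT α
  | .hole, s => s
  | .nodeL a c b r, s => .node a (c.plug s) b r
  | .nodeR a l b c, s => .node a l b (c.plug s)

end CT

/-- A bough of level `k`, represented by the one-hole context `c` (the hole
sits at the last backbone node `b_n`) together with its split `σ`: the root and
the hole position are backbone nodes (split value `k`), every node on the path
from the root to the hole has split value `≥ k`, and the dimension is `≥ 1`. -/
def IsBough {α : Type} (N k : ℕ) (c : CT α) (σ : List Bool → ℕ) : Prop :=
  c.holePos ≠ [] ∧
  (∀ p, (c.plug .leaf).valid p → 1 ≤ σ p ∧ σ p ≤ N) ∧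
  σ [] = k ∧ σ c.holePos = k ∧
  ∀ j, 0 < j → j < c.holePos.length → k ≤ σ (c.holePos.take j)

/-- Dimension of a bough: the number of backbone nodes below the root. -/
def boughDim {α : Type} (k : ℕ) (c : CT α) (σ : List Bool → ℕ) : ℕ :=
  ((Finset.Icc 1 c.holePos.length).filter fun j => σ (c.holePos.take j) = k).card

/-- `j` is the depth of a backbone node of the bough. -/
def Backbone {α : Type} (k : ℕ) (c : CT α) (σ : List Bool → ℕ) (j : ℕ) : Prop :=
  j ≤ c.holePos.length ∧ σ (c.holePos.take j) = k

/-- `m` is the first idempotent value `π(b₀,b₁)` of the bough. -/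
def FirstIdem {M : Type} [Monoid M] (k : ℕ) (c : CT M) (σ : List Bool → ℕ)
    (m : M) : Prop :=
  ∃ j, 0 < j ∧ j ≤ c.holePos.length ∧ σ (c.holePos.take j) = k ∧
    (∀ j', 0 < j' → j' < j → σ (c.holePos.take j') ≠ k) ∧
    m = pi id (c.plug .leaf) [] (c.holePos.take j)

/-- A context `C[□]` in which boughs are plugged. -/
structure BCtx (M : Type) where
  cRoot : CT M
  σRoot : List Bool → ℕ
  tLeft : BT M
  σLeft : List Bool → ℕ
  tRight : BT M
  σRight : List Bool → ℕ
  mLeft : M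
  mRight : M

/-- The tree `C[B]`. -/
def BCtx.plugB {M : Type} (C : BCtx M) (c : CT M) : BT M :=
  C.cRoot.plug (c.plug (BT.node C.mLeft C.tLeft C.mRight C.tRight))

/-- The split induced on `C[B]`. -/
def BCtx.plugSplit {M : Type} (C : BCtx M) (c : CT M) (σ : List Bool → ℕ) :
    List Bool → ℕ :=
  fun p =>
    if C.cRoot.holePos.isPrefixOf p then
      let q := p.drop C.cRoot.holePos.length
      if c.holePos.isPrefixOf q then
        match q.drop c.holePos.length with
        | [] => σ q
        | false :: rest => C.σLeft rest
        | true :: rest => C.σRight rest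
      else σ q
    else C.σRoot p

/-- Two boughs of level `k` are compatible: same first idempotent value, and
every context making the first forward Ramseyan makes the second forward
Ramseyan. -/
def Compatible {M : Type} [Monoid M] (N k : ℕ) (c : CT M) (σ : List Bool → ℕ)
    (c' : CT M) (σ' : List Bool → ℕ) : Prop :=
  (∀ m, FirstIdem k c σ m ↔ FirstIdem k c' σ' m) ∧
  ∀ C : BCtx M, FR id N (C.plugB c) (C.plugSplit c σ) →
    FR id N (C.plugB c') (C.plugSplit c' σ')

/-- A good bough with respect to the interpretation `I_P`. -/
def GoodBough {M : Type} [Monoid M] (P : Set (M × M × M)) (N k : ℕ)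
    (C : BCtx M) (c : CT M) (σ : List Bool → ℕ) : Prop :=
  ∃ (c' : CT M) (σ' : List Bool → ℕ), IsBough N k c' σ' ∧
    Compatible N k c σ c' σ' ∧
  ∃ h : List Bool → List Bool,
    -- h is an embedding of graphs from I_P(C[B]) to I_P(C[H])
    (∀ x, (C.plugB c).IsLeafPos x → (C.plugB c').IsLeafPos (h x)) ∧
    (∀ x y, (C.plugB c).IsLeafPos x → (C.plugB c).IsLeafPos y →
      h x = h y → x = y) ∧
    (∀ x y, (C.plugB c).IsLeafPos x → (C.plugB c).IsLeafPos y →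
      (IPEdge id P (C.plugB c) x y ↔ IPEdge id P (C.plugB c') (h x) (h y))) ∧
    -- h is the identity on the leaves of C[□]
    (∀ p, ¬ (C.cRoot.holePos <+: p) → (C.plugB c).IsLeafPos p → h p = p) ∧
    (∀ q, (C.plugB c).IsLeafPos (C.cRoot.holePos ++ c.holePos ++ false :: q) →
      h (C.cRoot.holePos ++ c.holePos ++ false :: q) =
        C.cRoot.holePos ++ c'.holePos ++ false :: q) ∧
    (∀ q, (C.plugB c).IsLeafPos (C.cRoot.holePos ++ c.holePos ++ true :: q) →
      h (C.cRoot.holePos ++ c.holePos ++ true :: q) =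
        C.cRoot.holePos ++ c'.holePos ++ true :: q) ∧
    -- three consecutive blocks of H have no leaf in the image of h
    ∃ j₀ j₁ j₂ j₃, Backbone k c' σ' j₀ ∧ Backbone k c' σ' j₁ ∧
      Backbone k c' σ' j₂ ∧ Backbone k c' σ' j₃ ∧
      j₀ < j₁ ∧ j₁ < j₂ ∧ j₂ < j₃ ∧
      (∀ j, Backbone k c' σ' j →
        ¬ (j₀ < j ∧ j < j₁) ∧ ¬ (j₁ < j ∧ j < j₂) ∧ ¬ (j₂ < j ∧ j < j₃)) ∧
      (∀ x, (C.plugB c').IsLeafPos x →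
        (C.cRoot.holePos ++ c'.holePos.take j₀) <+: x →
        ¬ ((C.cRoot.holePos ++ c'.holePos.take j₃) <+: x) →
        ∀ y, (C.plugB c).IsLeafPos y → h y ≠ x)

/-! ### Classes of finite graphs -/

/-- A finite graph: a number of vertices together with a simple graph on them. -/
def FinGraph : Type := (n : ℕ) × SimpleGraph (Fin n)

/-- Labelled induced-subgraph embedding between labelled graphs. -/
def LabEmbOn {VG VH X : Type} (le : X → X → Prop)
    (adjG : VG → VG → Prop) (adjH : VH → VH → Prop)
    (lG : VG → X) (lH : VH → X) : Prop :=
  ∃ f : VG → VH, Function.Injective f ∧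
    (∀ u v, adjG u v ↔ adjH (f u) (f v)) ∧ ∀ v, le (lG v) (lH (f v))

/-- The `(X,le)`-labelled graphs with underlying graph in `Cl` are WQO under
labelled induced-subgraph embeddings. -/
def ClassWqoWith (Cl : Set FinGraph) (X : Type) (le : X → X → Prop) : Prop :=
  ∀ G : ℕ → FinGraph, (∀ i, G i ∈ Cl) → ∀ l : (i : ℕ) → Fin (G i).1 → X,
    ∃ i j : ℕ, i < j ∧ LabEmbOn le (G i).2.Adj (G j).2.Adj (l i) (l j)

/-- 2-well-quasi-ordered class. -/
def TwoWqoClass (Cl : Set FinGraph) : Prop :=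
  ∀ X : Type, Nonempty (X ≃ Fin 2) → ClassWqoWith Cl X Eq

/-- ∀-well-quasi-ordered class. -/
def ForallWqoClass (Cl : Set FinGraph) : Prop :=
  ∀ (X : Type) (le : X → X → Prop), Reflexive le → Transitive le → IsWqo le →
    ClassWqoWith Cl X le

/-- The graph `(V, adj)` is (isomorphic to) the interpretation of a tree. -/
def InImageOn {α M : Type} [Monoid M] (μ : α → M) (P : Set (M × M × M))
    (V : Type) (adj : V → V → Prop) : Prop :=
  ∃ (T : BT α) (e : V → List Bool), Function.Injective e ∧
    (∀ v, T.IsLeafPos (e v)) ∧ (∀ p, T.IsLeafPos p → ∃ v, e v = p) ∧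
    ∀ u v, adj u v ↔ IPEdge μ P T (e u) (e v)

/-- The image of the monoid interpretation `(μ, P)`, as a class of graphs. -/
def ImageClass {α M : Type} [Monoid M] (μ : α → M) (P : Set (M × M × M)) :
    Set FinGraph :=
  {G | InImageOn μ P (Fin G.1) G.2.Adj}

/-- Hereditary class (closed under induced subgraphs). -/
def HereditaryClass (Cl : Set FinGraph) : Prop :=
  ∀ G ∈ Cl, ∀ H : FinGraph,
    (∃ f : Fin H.1 → Fin G.1, Function.Injective f ∧
      ∀ u v, H.2.Adj u v ↔ G.2.Adj (f u) (f v)) → H ∈ Cl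


/-! ### Regular and periodic sequences of graphs -/

/-- The edge relation of the `r`-th graph `G^r` of the regular sequence
`(G₀, ℓ, C₀, F₀)`, on vertex set `Fin m × Fin r`. -/
def regAdj {m : ℕ} {Sig : Type} (G₀ : SimpleGraph (Fin m)) (ℓ : Fin m → Sig)
    (C₀ F₀ : Set (Sig × Sig)) (r : ℕ) :
    (Fin m × Fin r) → (Fin m × Fin r) → Prop := fun a b =>
  (a.2 = b.2 ∧ G₀.Adj a.1 b.1) ∨
  ((a.2 : ℕ) + 1 = (b.2 : ℕ) ∧ (ℓ a.1, ℓ b.1) ∈ C₀) ∨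
  ((b.2 : ℕ) + 1 = (a.2 : ℕ) ∧ (ℓ b.1, ℓ a.1) ∈ C₀) ∨
  ((a.2 : ℕ) + 1 < (b.2 : ℕ) ∧ (ℓ a.1, ℓ b.1) ∈ F₀) ∨
  ((b.2 : ℕ) + 1 < (a.2 : ℕ) ∧ (ℓ b.1, ℓ a.1) ∈ F₀)

/-- Labels of the vertices of `G^r`: the label in `Sig` together with the
markers `▷` (first copy) and `◁` (last copy). -/
def regLabel {m : ℕ} {Sig : Type} (ℓ : Fin m → Sig) (r : ℕ) :
    Fin m × Fin r → Sig × Bool × Bool := fun a =>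
  (ℓ a.1, decide ((a.2 : ℕ) = 0), decide ((a.2 : ℕ) = r - 1))

/-- The regular sequence `(G₀, ℓ, C₀, F₀)` is a regular antichain. -/
def IsRegularAntichain {m : ℕ} {Sig : Type} (G₀ : SimpleGraph (Fin m))
    (ℓ : Fin m → Sig) (C₀ F₀ : Set (Sig × Sig)) : Prop :=
  ∀ r s : ℕ, 1 ≤ r → 1 ≤ s → r ≠ s →
    ¬ LabEmbOn Eq (regAdj G₀ ℓ C₀ F₀ r) (regAdj G₀ ℓ C₀ F₀ s)
        (regLabel ℓ r) (regLabel ℓ s)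

/-- The arcs of the directed graph `H^r` associated with a regular sequence. -/
def regArc {m : ℕ} {Sig : Type} (G₀ : SimpleGraph (Fin m)) (ℓ : Fin m → Sig)
    (C₀ F₀ : Set (Sig × Sig)) (r : ℕ) :
    (Fin m × Fin r) → (Fin m × Fin r) → Prop := fun a b =>
  ¬ (regAdj G₀ ℓ C₀ F₀ r a b ↔ (ℓ a.1, ℓ b.1) ∈ F₀)

/-- `i`-th letter of the infinite periodic word `w^ω`. -/
def perLetter {Sig : Type} {p : ℕ} (hp : 0 < p) (w : Fin p → Sig) (n : ℕ) : Sig :=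
  w ⟨n % p, Nat.mod_lt n hp⟩

/-- The edge relation of the `r`-th graph `G_{w^r}` of the periodic sequence
`(w, C₀, F₀)`, on vertex set `Fin (r * p)`. -/
def perAdj {Sig : Type} {p : ℕ} (hp : 0 < p) (w : Fin p → Sig)
    (C₀ F₀ : Set (Sig × Sig)) (r : ℕ) :
    Fin (r * p) → Fin (r * p) → Prop := fun a b =>
  ((a : ℕ) + 1 = (b : ℕ) ∧ (perLetter hp w a, perLetter hp w b) ∈ C₀) ∨
  ((b : ℕ) + 1 = (a : ℕ) ∧ (perLetter hp w b, perLetter hp w a) ∈ C₀) ∨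
  ((a : ℕ) + 1 < (b : ℕ) ∧ (perLetter hp w a, perLetter hp w b) ∈ F₀) ∨
  ((b : ℕ) + 1 < (a : ℕ) ∧ (perLetter hp w b, perLetter hp w a) ∈ F₀)

/-- Labels of the vertices of `G_{w^r}`: unlabelled (`0`) except the first
vertex (`1`, for `▷`) and the last vertex (`2`, for `◁`). -/
def perLabel (n : ℕ) (i : Fin n) : ℕ :=
  if (i : ℕ) = 0 then 1 else if (i : ℕ) = n - 1 then 2 else 0

/-- The periodic sequence `(w, C₀, F₀)` is a periodic antichain. -/
def IsPeriodicAntichain {Sig : Type} {p : ℕ} (hp : 0 < p) (w : Fin p → Sig)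
    (C₀ F₀ : Set (Sig × Sig)) : Prop :=
  ∀ r s : ℕ, 1 ≤ r → 1 ≤ s → r ≠ s →
    ¬ LabEmbOn Eq (perAdj hp w C₀ F₀ r) (perAdj hp w C₀ F₀ s)
        (perLabel (r * p)) (perLabel (s * p))

/-! ### Existential first-order formulas over labelled graphs -/

/-- Quantifier-free formulas in the language of `Sig`-labelled graphs,
with variables in `α`. -/
inductive QF (Sig : Type) (α : Type) : Type
  | tru : QF Sig α
  | eq : α → α → QF Sig α
  | edge : α → α → QF Sig α
  | lab : Sig → α → QF Sig α
  | not : QF Sig α → QF Sig α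
  | and : QF Sig α → QF Sig α → QF Sig α
  | or : QF Sig α → QF Sig α → QF Sig α

/-- Evaluation of quantifier-free formulas in a labelled graph. -/
def QF.eval {Sig α V : Type} (adj : V → V → Prop) (lb : V → Sig)
    (ass : α → V) : QF Sig α → Prop
  | .tru => True
  | .eq i j => ass i = ass j
  | .edge i j => adj (ass i) (ass j)
  | .lab a i => lb (ass i) = a
  | .not φ => ¬ QF.eval adj lb ass φ
  | .and φ ψ => QF.eval adj lb ass φ ∧ QF.eval adj lb ass ψ
  | .or φ ψ => QF.eval adj lb ass φ ∨ QF.eval adj lb ass ψ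

/-- Existential first-order formulas: a block of `k` existential quantifiers
followed by a quantifier-free formula. -/
structure EF (Sig : Type) (α : Type) : Type where
  k : ℕ
  body : QF Sig (α ⊕ Fin k)

/-- Satisfaction of an existential formula in a labelled graph, under an
assignment of the free variables. -/
def EF.Realize {Sig α V : Type} (adj : V → V → Prop) (lb : V → Sig)
    (φ : EF Sig α) (ass : α → V) : Prop :=
  ∃ w : Fin φ.k → V, φ.body.eval adj lb (Sum.elim ass w)

/-- Adjacency in the path graph on `n` vertices. -/
def pathAdj (n : ℕ) (i j : Fin n) : Prop :=
  (i : ℕ) + 1 = (j : ℕ) ∨ (j : ℕ) + 1 = (i : ℕ)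


/-! ### Auxiliary material for `spanning_path_exists` -/

section SpanningPathAux

open scoped Classical

variable {m : ℕ} {Sig : Type} (G₀ : SimpleGraph (Fin m)) (ℓ : Fin m → Sig)
  (C₀ F₀ : Set (Sig × Sig))

/-- Up-move: adjacency between consecutive copies differs from the `F₀` default. -/
def spU (u v : Fin m) : Prop := ¬((ℓ u, ℓ v) ∈ C₀ ↔ (ℓ u, ℓ v) ∈ F₀)

/-- Same-layer move. -/
def spS (u v : Fin m) : Prop := ¬(G₀.Adj u v ↔ (ℓ u, ℓ v) ∈ F₀)

/-- Down-move (one layer down). -/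
def spD (u v : Fin m) : Prop := ¬((ℓ v, ℓ u) ∈ C₀ ↔ (ℓ u, ℓ v) ∈ F₀)

/-- Long down-move (at least two layers down). -/
def spL (u v : Fin m) : Prop := ¬((ℓ v, ℓ u) ∈ F₀ ↔ (ℓ u, ℓ v) ∈ F₀)

/-- `C₀` differs from graph adjacency. -/
def spY (u v : Fin m) : Prop := ¬((ℓ u, ℓ v) ∈ C₀ ↔ G₀.Adj u v)

/-- Some move from `u` to `v` exists. -/
def spMv (u v : Fin m) : Prop :=
  spU ℓ C₀ F₀ u v ∨ spS G₀ ℓ F₀ u v ∨ spD ℓ C₀ F₀ u v ∨ spL ℓ F₀ u v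

/-- The best (largest) layer gain of a move from `u` to `v`. -/
noncomputable def spWt (u v : Fin m) : ℤ :=
  if spU ℓ C₀ F₀ u v then 1 else if spS G₀ ℓ F₀ u v then 0
  else if spD ℓ C₀ F₀ u v then -1 else -2

lemma spWt_le (u v : Fin m) : spWt G₀ ℓ C₀ F₀ u v ≤ 1 := by
  unfold spWt; split_ifs <;> norm_num

lemma spWt_ge (u v : Fin m) : -2 ≤ spWt G₀ ℓ C₀ F₀ u v := by
  unfold spWt; split_ifs <;> norm_num

lemma spU_wt (u v : Fin m) (h : spU ℓ C₀ F₀ u v) : spWt G₀ ℓ C₀ F₀ u v = 1 :=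
  if_pos h

lemma spU_mv (u v : Fin m) (h : spU ℓ C₀ F₀ u v) : spMv G₀ ℓ C₀ F₀ u v := Or.inl h

lemma spU_mv_rev (u v : Fin m) (h : spU ℓ C₀ F₀ u v) : spMv G₀ ℓ C₀ F₀ v u := by
  unfold spMv spU spS spD spL at *; tauto

lemma spY_fwd (u v : Fin m) (h : spY G₀ ℓ C₀ u v) :
    spMv G₀ ℓ C₀ F₀ u v ∧ 0 ≤ spWt G₀ ℓ C₀ F₀ u v := by
  constructor
  · unfold spMv spY spU spS spD spL at *; tauto
  · unfold spWt; unfold spY at h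
    split_ifs with h1 h2
    · norm_num
    · norm_num
    · exact absurd ((not_not.mp h1).trans (not_not.mp h2).symm) h
    · exact absurd ((not_not.mp h1).trans (not_not.mp h2).symm) h

lemma spY_rev (u v : Fin m) (h : spY G₀ ℓ C₀ u v) :
    spMv G₀ ℓ C₀ F₀ v u ∧ -1 ≤ spWt G₀ ℓ C₀ F₀ v u := by
  have hA : G₀.Adj v u ↔ G₀.Adj u v := G₀.adj_comm v u
  constructor
  · unfold spMv spY spU spS spD spL at *; tauto
  · unfold spWt; unfold spY at h
    split_ifs with h1 h2 h3
    · norm_num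
    · norm_num
    · norm_num
    · exact absurd ((not_not.mp h3).trans ((not_not.mp h2).symm.trans hA)) h

/-- Natural-number version of the adjacency of `regAdj`. -/
def spPat (u v : Fin m) (i j : ℕ) : Prop :=
  (i = j ∧ G₀.Adj u v) ∨ (i + 1 = j ∧ (ℓ u, ℓ v) ∈ C₀) ∨
  (j + 1 = i ∧ (ℓ v, ℓ u) ∈ C₀) ∨ (i + 1 < j ∧ (ℓ u, ℓ v) ∈ F₀) ∨
  (j + 1 < i ∧ (ℓ v, ℓ u) ∈ F₀)

lemma spPat_same (u v : Fin m) (i j : ℕ) (h : i = j) :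
    spPat G₀ ℓ C₀ F₀ u v i j ↔ G₀.Adj u v := by
  subst h; unfold spPat
  constructor
  · rintro (⟨_, hx⟩ | ⟨hg, _⟩ | ⟨hg, _⟩ | ⟨hg, _⟩ | ⟨hg, _⟩) <;> first | exact hx | omega
  · exact fun hx => Or.inl ⟨rfl, hx⟩

lemma spPat_succ (u v : Fin m) (i j : ℕ) (h : i + 1 = j) :
    spPat G₀ ℓ C₀ F₀ u v i j ↔ (ℓ u, ℓ v) ∈ C₀ := by
  subst h; unfold spPat
  constructor
  · rintro (⟨hg, _⟩ | ⟨_, hx⟩ | ⟨hg, _⟩ | ⟨hg, _⟩ | ⟨hg, _⟩) <;> first | exact hx | omega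
  · exact fun hx => Or.inr (Or.inl ⟨rfl, hx⟩)

lemma spPat_pred (u v : Fin m) (i j : ℕ) (h : j + 1 = i) :
    spPat G₀ ℓ C₀ F₀ u v i j ↔ (ℓ v, ℓ u) ∈ C₀ := by
  subst h; unfold spPat
  constructor
  · rintro (⟨hg, _⟩ | ⟨hg, _⟩ | ⟨_, hx⟩ | ⟨hg, _⟩ | ⟨hg, _⟩) <;> first | exact hx | omega
  · exact fun hx => Or.inr (Or.inr (Or.inl ⟨rfl, hx⟩))

lemma spPat_farU (u v : Fin m) (i j : ℕ) (h : i + 1 < j) :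
    spPat G₀ ℓ C₀ F₀ u v i j ↔ (ℓ u, ℓ v) ∈ F₀ := by
  unfold spPat
  constructor
  · rintro (⟨hg, _⟩ | ⟨hg, _⟩ | ⟨hg, _⟩ | ⟨_, hx⟩ | ⟨hg, _⟩) <;> first | exact hx | omega
  · exact fun hx => Or.inr (Or.inr (Or.inr (Or.inl ⟨h, hx⟩)))

lemma spPat_farD (u v : Fin m) (i j : ℕ) (h : j + 1 < i) :
    spPat G₀ ℓ C₀ F₀ u v i j ↔ (ℓ v, ℓ u) ∈ F₀ := by
  unfold spPat
  constructor
  · rintro (⟨hg, _⟩ | ⟨hg, _⟩ | ⟨hg, _⟩ | ⟨hg, _⟩ | ⟨_, hx⟩) <;> first | exact hx | omega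
  · exact fun hx => Or.inr (Or.inr (Or.inr (Or.inr ⟨h, hx⟩)))

lemma spPat_symm (u v : Fin m) (i j : ℕ) :
    spPat G₀ ℓ C₀ F₀ u v i j ↔ spPat G₀ ℓ C₀ F₀ v u j i := by
  unfold spPat
  constructor <;> rintro (⟨h1, h2⟩ | ⟨h1, h2⟩ | ⟨h1, h2⟩ | ⟨h1, h2⟩ | ⟨h1, h2⟩)
  · exact Or.inl ⟨h1.symm, h2.symm⟩
  · exact Or.inr (Or.inr (Or.inl ⟨h1, h2⟩))
  · exact Or.inr (Or.inl ⟨h1, h2⟩)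
  · exact Or.inr (Or.inr (Or.inr (Or.inr ⟨h1, h2⟩)))
  · exact Or.inr (Or.inr (Or.inr (Or.inl ⟨h1, h2⟩)))
  · exact Or.inl ⟨h1.symm, h2.symm⟩
  · exact Or.inr (Or.inr (Or.inl ⟨h1, h2⟩))
  · exact Or.inr (Or.inl ⟨h1, h2⟩)
  · exact Or.inr (Or.inr (Or.inr (Or.inr ⟨h1, h2⟩)))
  · exact Or.inr (Or.inr (Or.inr (Or.inl ⟨h1, h2⟩)))

lemma spRegAdj_pat (r : ℕ) (u v : Fin m) (x y : Fin r) :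
    regAdj G₀ ℓ C₀ F₀ r (u, x) (v, y) ↔ spPat G₀ ℓ C₀ F₀ u v (x : ℕ) (y : ℕ) := by
  unfold regAdj spPat
  simp only [Fin.ext_iff]

/-- The threshold shift of layers. -/
def spSh (k : Fin m → ℕ) (u : Fin m) (i : ℕ) : ℕ := if k u < i then i + 1 else i

lemma spPat_shift_le (k : Fin m → ℕ)
    (hkY : ∀ u v, spY G₀ ℓ C₀ u v → k u ≤ k v ∧ k v ≤ k u + 1)
    (hkU : ∀ u v, spU ℓ C₀ F₀ u v → k u + 1 ≤ k v ∧ k v ≤ k u + 2)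
    (u v : Fin m) (i j : ℕ) (hij : i ≤ j) :
    spPat G₀ ℓ C₀ F₀ u v i j ↔ spPat G₀ ℓ C₀ F₀ u v (spSh k u i) (spSh k v j) := by
  unfold spSh
  rcases (show j = i ∨ j = i + 1 ∨ j = i + 2 ∨ i + 3 ≤ j by omega) with h | h | h | h
  · rw [h]
    by_cases h1 : k u < i
    · by_cases h2 : k v < i
      · rw [if_pos h1, if_pos h2]
        exact (spPat_same G₀ ℓ C₀ F₀ u v i i rfl).trans
          (spPat_same G₀ ℓ C₀ F₀ u v (i + 1) (i + 1) rfl).symm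
      · rw [if_pos h1, if_neg h2]
        have hy : ¬ spY G₀ ℓ C₀ v u := fun hy => by have := (hkY v u hy).1; omega
        have hc : (ℓ v, ℓ u) ∈ C₀ ↔ G₀.Adj v u := not_not.mp hy
        refine (spPat_same G₀ ℓ C₀ F₀ u v i i rfl).trans
          (Iff.trans ?_ (spPat_pred G₀ ℓ C₀ F₀ u v (i + 1) i rfl).symm)
        rw [G₀.adj_comm]
        exact hc.symm
    · by_cases h2 : k v < i
      · rw [if_neg h1, if_pos h2]
        have hy : ¬ spY G₀ ℓ C₀ u v := fun hy => by have := (hkY u v hy).1; omega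
        have hc : (ℓ u, ℓ v) ∈ C₀ ↔ G₀.Adj u v := not_not.mp hy
        exact (spPat_same G₀ ℓ C₀ F₀ u v i i rfl).trans
          (hc.symm.trans (spPat_succ G₀ ℓ C₀ F₀ u v i (i + 1) rfl).symm)
      · rw [if_neg h1, if_neg h2]
  · subst h
    by_cases h1 : k u < i
    · by_cases h2 : k v < i + 1
      · rw [if_pos h1, if_pos h2]
        exact (spPat_succ G₀ ℓ C₀ F₀ u v i (i + 1) rfl).trans
          (spPat_succ G₀ ℓ C₀ F₀ u v (i + 1) (i + 2) rfl).symm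
      · rw [if_pos h1, if_neg h2]
        have hy : ¬ spY G₀ ℓ C₀ u v := fun hy => by have := (hkY u v hy).2; omega
        have hc : (ℓ u, ℓ v) ∈ C₀ ↔ G₀.Adj u v := not_not.mp hy
        exact (spPat_succ G₀ ℓ C₀ F₀ u v i (i + 1) rfl).trans
          (hc.trans (spPat_same G₀ ℓ C₀ F₀ u v (i + 1) (i + 1) rfl).symm)
    · by_cases h2 : k v < i + 1
      · rw [if_neg h1, if_pos h2]
        have hu : ¬ spU ℓ C₀ F₀ u v := fun hu => by have := (hkU u v hu).1; omega
        have hc : (ℓ u, ℓ v) ∈ C₀ ↔ (ℓ u, ℓ v) ∈ F₀ := not_not.mp hu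
        exact (spPat_succ G₀ ℓ C₀ F₀ u v i (i + 1) rfl).trans
          (hc.trans (spPat_farU G₀ ℓ C₀ F₀ u v i (i + 2) (by omega)).symm)
      · rw [if_neg h1, if_neg h2]
  · subst h
    by_cases h1 : k u < i
    · by_cases h2 : k v < i + 2
      · rw [if_pos h1, if_pos h2]
        exact (spPat_farU G₀ ℓ C₀ F₀ u v i (i + 2) (by omega)).trans
          (spPat_farU G₀ ℓ C₀ F₀ u v (i + 1) (i + 3) (by omega)).symm
      · rw [if_pos h1, if_neg h2]
        have hu : ¬ spU ℓ C₀ F₀ u v := fun hu => by have := (hkU u v hu).2; omega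
        have hc : (ℓ u, ℓ v) ∈ C₀ ↔ (ℓ u, ℓ v) ∈ F₀ := not_not.mp hu
        exact (spPat_farU G₀ ℓ C₀ F₀ u v i (i + 2) (by omega)).trans
          (hc.symm.trans (spPat_succ G₀ ℓ C₀ F₀ u v (i + 1) (i + 2) rfl).symm)
    · by_cases h2 : k v < i + 2
      · rw [if_neg h1, if_pos h2]
        exact (spPat_farU G₀ ℓ C₀ F₀ u v i (i + 2) (by omega)).trans
          (spPat_farU G₀ ℓ C₀ F₀ u v i (i + 3) (by omega)).symm
      · rw [if_neg h1, if_neg h2]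
  · by_cases h1 : k u < i
    · by_cases h2 : k v < j
      · rw [if_pos h1, if_pos h2]
        exact (spPat_farU G₀ ℓ C₀ F₀ u v i j (by omega)).trans
          (spPat_farU G₀ ℓ C₀ F₀ u v (i + 1) (j + 1) (by omega)).symm
      · rw [if_pos h1, if_neg h2]
        exact (spPat_farU G₀ ℓ C₀ F₀ u v i j (by omega)).trans
          (spPat_farU G₀ ℓ C₀ F₀ u v (i + 1) j (by omega)).symm
    · by_cases h2 : k v < j
      · rw [if_neg h1, if_pos h2]
        exact (spPat_farU G₀ ℓ C₀ F₀ u v i j (by omega)).trans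
          (spPat_farU G₀ ℓ C₀ F₀ u v i (j + 1) (by omega)).symm
      · rw [if_neg h1, if_neg h2]

lemma spPat_shift (k : Fin m → ℕ)
    (hkY : ∀ u v, spY G₀ ℓ C₀ u v → k u ≤ k v ∧ k v ≤ k u + 1)
    (hkU : ∀ u v, spU ℓ C₀ F₀ u v → k u + 1 ≤ k v ∧ k v ≤ k u + 2)
    (u v : Fin m) (i j : ℕ) :
    spPat G₀ ℓ C₀ F₀ u v i j ↔ spPat G₀ ℓ C₀ F₀ u v (spSh k u i) (spSh k v j) := by
  rcases le_or_gt i j with h | h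
  · exact spPat_shift_le G₀ ℓ C₀ F₀ k hkY hkU u v i j h
  · rw [spPat_symm G₀ ℓ C₀ F₀ u v i j,
      spPat_symm G₀ ℓ C₀ F₀ u v (spSh k u i) (spSh k v j)]
    exact spPat_shift_le G₀ ℓ C₀ F₀ k hkY hkU v u j i (le_of_lt h)

lemma spNoPotential (hanti : IsRegularAntichain G₀ ℓ C₀ F₀) (hm : 0 < m)
    (ψ : Fin m → ℤ)
    (hpot : ∀ u v, spMv G₀ ℓ C₀ F₀ u v → ψ u + spWt G₀ ℓ C₀ F₀ u v ≤ ψ v) :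
    False := by
  have hne : (Finset.univ : Finset (Fin m)).Nonempty := ⟨⟨0, hm⟩, Finset.mem_univ _⟩
  set μ := Finset.univ.inf' hne ψ with hμ
  have hμle : ∀ u, μ ≤ ψ u := fun u => Finset.inf'_le ψ (Finset.mem_univ u)
  set k : Fin m → ℕ := fun u => (ψ u - μ).toNat with hkdef
  have hkval : ∀ u, (k u : ℤ) = ψ u - μ := fun u =>
    Int.toNat_of_nonneg (by have := hμle u; omega)
  have hkY : ∀ u v, spY G₀ ℓ C₀ u v → k u ≤ k v ∧ k v ≤ k u + 1 := by
    intro u v hy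
    obtain ⟨hmv1, hw1⟩ := spY_fwd G₀ ℓ C₀ F₀ u v hy
    obtain ⟨hmv2, hw2⟩ := spY_rev G₀ ℓ C₀ F₀ u v hy
    have h1 := hpot u v hmv1
    have h2 := hpot v u hmv2
    have e1 := hkval u; have e2 := hkval v
    omega
  have hkU : ∀ u v, spU ℓ C₀ F₀ u v → k u + 1 ≤ k v ∧ k v ≤ k u + 2 := by
    intro u v hu
    have h1 := hpot u v (spU_mv G₀ ℓ C₀ F₀ u v hu)
    have h2 := hpot v u (spU_mv_rev G₀ ℓ C₀ F₀ u v hu)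
    have hw1 := spU_wt G₀ ℓ C₀ F₀ u v hu
    have hw2 := spWt_ge G₀ ℓ C₀ F₀ v u
    have e1 := hkval u; have e2 := hkval v
    omega
  set B := Finset.univ.sup' hne k with hBdef
  have hkB : ∀ u, k u ≤ B := fun u => Finset.le_sup' k (Finset.mem_univ u)
  apply hanti (B + 2) (B + 3) (by omega) (by omega) (by omega)
  refine ⟨fun a => (a.1, ⟨spSh k a.1 (a.2 : ℕ), ?_⟩), ?_, ?_, ?_⟩
  · have := a.2.isLt; have := hkB a.1; unfold spSh; split_ifs <;> omega
  · rintro ⟨u, x⟩ ⟨v, y⟩ hab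
    simp only [Prod.mk.injEq, Fin.mk.injEq] at hab
    obtain ⟨h1, h2⟩ := hab
    subst h1
    have hxy : (x : ℕ) = (y : ℕ) := by
      unfold spSh at h2; split_ifs at h2 <;> omega
    exact Prod.ext_iff.mpr ⟨rfl, Fin.ext hxy⟩
  · rintro ⟨u, x⟩ ⟨v, y⟩
    rw [spRegAdj_pat G₀ ℓ C₀ F₀ (B + 2) u v x y,
      spRegAdj_pat G₀ ℓ C₀ F₀ (B + 3) u v _ _]
    exact spPat_shift G₀ ℓ C₀ F₀ k hkY hkU u v (x : ℕ) (y : ℕ)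
  · rintro ⟨u, x⟩
    have hx := x.isLt
    have hb := hkB u
    have h1 : ((x : ℕ) = 0) ↔ (spSh k u (x : ℕ) = 0) := by
      unfold spSh; split_ifs <;> constructor <;> intro h2 <;>
        first | omega | exact h2.elim
    have h2 : ((x : ℕ) = B + 2 - 1) ↔ (spSh k u (x : ℕ) = B + 3 - 1) := by
      unfold spSh; split_ifs <;> constructor <;> intro h2 <;>
        first | omega | exact h2.elim
    simp only [regLabel]
    exact Prod.ext_iff.mpr ⟨rfl, Prod.ext_iff.mpr
      ⟨by rw [decide_eq_decide]; exact h1, by rw [decide_eq_decide]; exact h2⟩⟩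

/-- Realizing a move as an arc of `H^r`. -/
lemma spArc_step (r : ℕ) (u v : Fin m) (hmv : spMv G₀ ℓ C₀ F₀ u v) (i j : ℕ)
    (hi : i < r) (hj : j < r) (hw : (j : ℤ) = (i : ℤ) + spWt G₀ ℓ C₀ F₀ u v) :
    regArc G₀ ℓ C₀ F₀ r (u, ⟨i, hi⟩) (v, ⟨j, hj⟩) := by
  unfold regArc
  rw [spRegAdj_pat G₀ ℓ C₀ F₀ r u v ⟨i, hi⟩ ⟨j, hj⟩]
  unfold spWt at hw
  split_ifs at hw with h1 h2 h3
  · rw [spPat_succ G₀ ℓ C₀ F₀ u v i j (by omega)]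
    exact h1
  · rw [spPat_same G₀ ℓ C₀ F₀ u v i j (by omega)]
    exact h2
  · rw [spPat_pred G₀ ℓ C₀ F₀ u v i j (by omega)]
    exact h3
  · have hl : spL ℓ F₀ u v := by
      unfold spMv at hmv
      rcases hmv with h | h | h | h
      · exact absurd h h1
      · exact absurd h h2
      · exact absurd h h3
      · exact h
    rw [spPat_farD G₀ ℓ C₀ F₀ u v i j (by omega)]
    exact hl

/-- Appending a vertex at the end of a chain. -/
lemma spChain_snoc {α : Type*} {R : α → α → Prop} :
    ∀ {a : α} {q : List α}, List.Chain R a q →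
      ∀ {c : α}, R ((a :: q).getLast (List.cons_ne_nil a q)) c →
        List.Chain R a (q ++ [c])
  | a, [], _, c, hc => List.Chain.cons hc List.Chain.nil
  | a, b :: q, h, c, hc => by
    rcases (List.chain_cons.mp h) with ⟨hab, h'⟩
    refine List.Chain.cons hab (spChain_snoc h' ?_)
    rwa [List.getLast_cons (List.cons_ne_nil b q)] at hc

lemma spGetLast_snoc {α : Type*} (a c : α) (q : List α) :
    (a :: (q ++ [c])).getLast (List.cons_ne_nil _ _) = c := by
  exact (List.getLast_concat : ((a :: q) ++ [c]).getLast _ = c)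

/-- One Bellman–Ford style relaxation sweep, iterated. -/
noncomputable def spPhi (hm : 0 < m) : ℕ → Fin m → ℤ
  | 0, _ => 0
  | n + 1, u =>
      Finset.univ.sup' ⟨⟨0, hm⟩, Finset.mem_univ _⟩ fun v =>
        if spMv G₀ ℓ C₀ F₀ v u then
          max (spPhi hm n u) (spPhi hm n v + spWt G₀ ℓ C₀ F₀ v u)
        else spPhi hm n u

lemma spPhi_zero (hm : 0 < m) (u : Fin m) : spPhi G₀ ℓ C₀ F₀ hm 0 u = 0 := rfl

lemma spPhi_succ_eq (hm : 0 < m) (n : ℕ) (u : Fin m) :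
    spPhi G₀ ℓ C₀ F₀ hm (n + 1) u
      = Finset.univ.sup' ⟨⟨0, hm⟩, Finset.mem_univ _⟩ (fun v =>
          if spMv G₀ ℓ C₀ F₀ v u then
            max (spPhi G₀ ℓ C₀ F₀ hm n u)
              (spPhi G₀ ℓ C₀ F₀ hm n v + spWt G₀ ℓ C₀ F₀ v u)
          else spPhi G₀ ℓ C₀ F₀ hm n u) := by
  simp only [spPhi]

lemma spPhi_mono (hm : 0 < m) (n : ℕ) (u : Fin m) :
    spPhi G₀ ℓ C₀ F₀ hm n u ≤ spPhi G₀ ℓ C₀ F₀ hm (n + 1) u := by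
  rw [spPhi_succ_eq]
  refine le_trans ?_ (Finset.le_sup' _ (Finset.mem_univ u))
  split_ifs
  · exact le_max_left _ _
  · exact le_refl _

lemma spPhi_nonneg (hm : 0 < m) (n : ℕ) (u : Fin m) : 0 ≤ spPhi G₀ ℓ C₀ F₀ hm n u := by
  induction n with
  | zero => exact le_refl 0
  | succ n ih => exact le_trans ih (spPhi_mono G₀ ℓ C₀ F₀ hm n u)

lemma spPhi_step (hm : 0 < m) (n : ℕ) (u v : Fin m) (h : spMv G₀ ℓ C₀ F₀ v u) :
    spPhi G₀ ℓ C₀ F₀ hm n v + spWt G₀ ℓ C₀ F₀ v u ≤ spPhi G₀ ℓ C₀ F₀ hm (n + 1) u := by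
  rw [spPhi_succ_eq]
  refine le_trans ?_ (Finset.le_sup' _ (Finset.mem_univ v))
  rw [if_pos h]
  exact le_max_right _ _

lemma spPhi_trace (hm : 0 < m) (n : ℕ) (u : Fin m) :
    spPhi G₀ ℓ C₀ F₀ hm (n + 1) u = spPhi G₀ ℓ C₀ F₀ hm n u ∨
    ∃ v, spMv G₀ ℓ C₀ F₀ v u ∧
      spPhi G₀ ℓ C₀ F₀ hm (n + 1) u
        = spPhi G₀ ℓ C₀ F₀ hm n v + spWt G₀ ℓ C₀ F₀ v u := by
  obtain ⟨v, _, hv⟩ := Finset.exists_mem_eq_sup'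
    (H := (⟨⟨0, hm⟩, Finset.mem_univ _⟩ : (Finset.univ : Finset (Fin m)).Nonempty))
    (fun v => if spMv G₀ ℓ C₀ F₀ v u then
        max (spPhi G₀ ℓ C₀ F₀ hm n u) (spPhi G₀ ℓ C₀ F₀ hm n v + spWt G₀ ℓ C₀ F₀ v u)
      else spPhi G₀ ℓ C₀ F₀ hm n u)
  have he : spPhi G₀ ℓ C₀ F₀ hm (n + 1) u
      = if spMv G₀ ℓ C₀ F₀ v u then
          max (spPhi G₀ ℓ C₀ F₀ hm n u) (spPhi G₀ ℓ C₀ F₀ hm n v + spWt G₀ ℓ C₀ F₀ v u)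
        else spPhi G₀ ℓ C₀ F₀ hm n u := (spPhi_succ_eq G₀ ℓ C₀ F₀ hm n u).trans hv
  by_cases hmv : spMv G₀ ℓ C₀ F₀ v u
  · rw [if_pos hmv] at he
    rcases max_choice (spPhi G₀ ℓ C₀ F₀ hm n u)
      (spPhi G₀ ℓ C₀ F₀ hm n v + spWt G₀ ℓ C₀ F₀ v u) with hc | hc
    · exact Or.inl (he.trans hc)
    · exact Or.inr ⟨v, hmv, he.trans hc⟩
  · rw [if_neg hmv] at he
    exact Or.inl he

end SpanningPathAux


/-- For a regular antichain and `r ≥ 3`, the directed graph `H^r` contains a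
spanning path: a directed path starting in the first copy of `G`, ending in the
last copy, and visiting every copy. -/
theorem spanning_path_exists (m : ℕ) (Sig : Type) [Fintype Sig]
    (G₀ : SimpleGraph (Fin m)) (ℓ : Fin m → Sig) (C₀ F₀ : Set (Sig × Sig))
    (hanti : IsRegularAntichain G₀ ℓ C₀ F₀) (r : ℕ) (hr : 3 ≤ r) :
    ∃ (a : Fin m × Fin r) (q : List (Fin m × Fin r)),
      List.Chain (regArc G₀ ℓ C₀ F₀ r) a q ∧
      (a.2 : ℕ) = 0 ∧
      (((a :: q).getLast (List.cons_ne_nil a q)).2 : ℕ) = r - 1 ∧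
      ∀ i : Fin r, ∃ b ∈ a :: q, b.2 = i := by
  classical
  have hm : 0 < m := by
    rcases Nat.eq_zero_or_pos m with h0 | h
    · exfalso
      subst h0
      exact hanti 1 2 (le_refl 1) (by norm_num) (by norm_num)
        ⟨fun a => a.1.elim0, fun a b h => a.1.elim0, fun a b => a.1.elim0,
          fun a => a.1.elim0⟩
    · exact h
  by_cases hfix : ∃ n, ∀ u, spPhi G₀ ℓ C₀ F₀ hm (n + 1) u = spPhi G₀ ℓ C₀ F₀ hm n u
  · obtain ⟨n, hn⟩ := hfix
    exact (spNoPotential G₀ ℓ C₀ F₀ hanti hm (spPhi G₀ ℓ C₀ F₀ hm n)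
      (fun u v hmv => by
        have h := spPhi_step G₀ ℓ C₀ F₀ hm n v u hmv
        rw [hn v] at h
        exact h)).elim
  · push_neg at hfix
    have hgrow : ∀ n : ℕ, (n : ℤ) ≤ ∑ u : Fin m, spPhi G₀ ℓ C₀ F₀ hm n u := by
      intro n
      induction n with
      | zero => simp [spPhi_zero]
      | succ n ih =>
        obtain ⟨u, hu⟩ := hfix n
        have hlt : ∑ v : Fin m, spPhi G₀ ℓ C₀ F₀ hm n v
            < ∑ v : Fin m, spPhi G₀ ℓ C₀ F₀ hm (n + 1) v :=
          Finset.sum_lt_sum (fun v _ => spPhi_mono G₀ ℓ C₀ F₀ hm n v)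
            ⟨u, Finset.mem_univ u,
              lt_of_le_of_ne (spPhi_mono G₀ ℓ C₀ F₀ hm n u) (Ne.symm hu)⟩
        push_cast
        omega
    obtain ⟨w, hw⟩ : ∃ u, (r : ℤ) - 1 ≤ spPhi G₀ ℓ C₀ F₀ hm (m * (r - 1)) u := by
      by_contra hcon
      push_neg at hcon
      have hle : ∑ u : Fin m, spPhi G₀ ℓ C₀ F₀ hm (m * (r - 1)) u
          ≤ ∑ _u : Fin m, ((r : ℤ) - 2) :=
        Finset.sum_le_sum (fun u _ => by have := hcon u; omega)
      rw [Finset.sum_const, Finset.card_univ, Fintype.card_fin, nsmul_eq_mul] at hle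
      have hg := hgrow (m * (r - 1))
      have hcast : ((m * (r - 1) : ℕ) : ℤ) = (m : ℤ) * ((r : ℤ) - 1) := by
        push_cast [Nat.cast_sub (by omega : 1 ≤ r)]
        ring
      have hmlt : (m : ℤ) * ((r : ℤ) - 2) < (m : ℤ) * ((r : ℤ) - 1) :=
        mul_lt_mul_of_pos_left (by omega) (by exact_mod_cast hm)
      rw [hcast] at hg
      linarith
    have key : ∀ n : ℕ,
        (∃ (a : Fin m × Fin r) (q : List (Fin m × Fin r)),
          List.Chain (regArc G₀ ℓ C₀ F₀ r) a q ∧ (a.2 : ℕ) = 0 ∧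
          (((a :: q).getLast (List.cons_ne_nil a q)).2 : ℕ) = r - 1 ∧
          ∀ i : Fin r, ∃ b ∈ a :: q, b.2 = i) ∨
        (∀ u : Fin m, spPhi G₀ ℓ C₀ F₀ hm n u ≤ (r : ℤ) - 2 ∧
          ∃ (a : Fin m × Fin r) (q : List (Fin m × Fin r)),
            List.Chain (regArc G₀ ℓ C₀ F₀ r) a q ∧ (a.2 : ℕ) = 0 ∧
            ((a :: q).getLast (List.cons_ne_nil a q)).1 = u ∧
            ((((a :: q).getLast (List.cons_ne_nil a q)).2 : ℕ) : ℤ)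
              = spPhi G₀ ℓ C₀ F₀ hm n u ∧
            ∀ t : ℕ, (t : ℤ) ≤ spPhi G₀ ℓ C₀ F₀ hm n u →
              ∃ b ∈ a :: q, (b.2 : ℕ) = t) := by
      intro n
      induction n with
      | zero =>
        refine Or.inr (fun u => ⟨by rw [spPhi_zero]; omega,
          (u, ⟨0, by omega⟩), [], List.Chain.nil, rfl, rfl,
          by rw [spPhi_zero]; rfl, ?_⟩)
        intro t ht
        rw [spPhi_zero] at ht
        exact ⟨(u, ⟨0, by omega⟩), by simp, by simp; omega⟩
      | succ n ih =>
        rcases ih with hdone | hinv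
        · exact Or.inl hdone
        · by_cases hcr : ∃ u, (r : ℤ) - 2 < spPhi G₀ ℓ C₀ F₀ hm (n + 1) u
          · obtain ⟨u, hu⟩ := hcr
            left
            rcases spPhi_trace G₀ ℓ C₀ F₀ hm n u with heq | ⟨v, hmv, heq⟩
            · exact absurd hu (by rw [heq]; exact not_lt.mpr (hinv u).1)
            · obtain ⟨hbv, a, q, hchain, hstart, hl1, hl2, hvis⟩ := hinv v
              have hw1 := spWt_le G₀ ℓ C₀ F₀ v u
              have hw2 := spWt_ge G₀ ℓ C₀ F₀ v u
              have hnn := spPhi_nonneg G₀ ℓ C₀ F₀ hm n v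
              have hv2 : spPhi G₀ ℓ C₀ F₀ hm n v = (r : ℤ) - 2 := by omega
              have hwt1 : spWt G₀ ℓ C₀ F₀ v u = 1 := by omega
              set c : Fin m × Fin r := (u, ⟨r - 1, by omega⟩) with hc
              have hmem : ∀ b, b ∈ a :: q → b ∈ a :: (q ++ [c]) := by
                intro b hb
                simp only [List.mem_cons, List.mem_append] at hb ⊢
                tauto
              have harc : regArc G₀ ℓ C₀ F₀ r
                  ((a :: q).getLast (List.cons_ne_nil a q)) c := by
                have hval : (((a :: q).getLast (List.cons_ne_nil a q)).2 : ℕ)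
                    = r - 2 := by omega
                have hlast : (a :: q).getLast (List.cons_ne_nil a q)
                    = (v, ⟨r - 2, by omega⟩) :=
                  Prod.ext_iff.mpr ⟨hl1, Fin.ext hval⟩
                rw [hlast]
                exact spArc_step G₀ ℓ C₀ F₀ r v u hmv (r - 2) (r - 1)
                  (by omega) (by omega) (by rw [hwt1]; omega)
              refine ⟨a, q ++ [c], spChain_snoc hchain harc, hstart, ?_, ?_⟩
              · rw [spGetLast_snoc]
              · intro i
                rcases (show ((i : ℕ) : ℤ) ≤ (r : ℤ) - 2 ∨ (i : ℕ) = r - 1 by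
                    have := i.isLt; omega) with hi | hi
                · obtain ⟨b, hbmem, hbval⟩ := hvis (i : ℕ) (by omega)
                  exact ⟨b, hmem b hbmem, Fin.ext hbval⟩
                · exact ⟨c, by simp, Fin.ext (by simpa [hc] using hi.symm)⟩
          · push_neg at hcr
            right
            intro u
            refine ⟨hcr u, ?_⟩
            rcases spPhi_trace G₀ ℓ C₀ F₀ hm n u with heq | ⟨v, hmv, heq⟩
            · obtain ⟨hb, a, q, hchain, hstart, hl1, hl2, hvis⟩ := hinv u
              exact ⟨a, q, hchain, hstart, hl1, by rw [heq]; exact hl2,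
                fun t ht => hvis t (by omega)⟩
            · obtain ⟨hbv, a, q, hchain, hstart, hl1, hl2, hvis⟩ := hinv v
              have hw1 := spWt_le G₀ ℓ C₀ F₀ v u
              have hw2 := spWt_ge G₀ ℓ C₀ F₀ v u
              have hnn := spPhi_nonneg G₀ ℓ C₀ F₀ hm n v
              have hnn2 := spPhi_nonneg G₀ ℓ C₀ F₀ hm (n + 1) u
              have hcru := hcr u
              set c : Fin m × Fin r :=
                (u, ⟨(spPhi G₀ ℓ C₀ F₀ hm (n + 1) u).toNat, by omega⟩) with hc
              have hmem : ∀ b, b ∈ a :: q → b ∈ a :: (q ++ [c]) := by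
                intro b hb
                simp only [List.mem_cons, List.mem_append] at hb ⊢
                tauto
              have hval : (((a :: q).getLast (List.cons_ne_nil a q)).2 : ℕ)
                  = (spPhi G₀ ℓ C₀ F₀ hm n v).toNat := by omega
              have hlast : (a :: q).getLast (List.cons_ne_nil a q)
                  = (v, ⟨(spPhi G₀ ℓ C₀ F₀ hm n v).toNat, by omega⟩) :=
                Prod.ext_iff.mpr ⟨hl1, Fin.ext hval⟩
              have harc : regArc G₀ ℓ C₀ F₀ r
                  ((a :: q).getLast (List.cons_ne_nil a q)) c := by
                rw [hlast]
                exact spArc_step G₀ ℓ C₀ F₀ r v u hmv _ _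
                  (by omega) (by omega) (by omega)
              refine ⟨a, q ++ [c], spChain_snoc hchain harc, hstart, ?_, ?_, ?_⟩
              · rw [spGetLast_snoc]
              · rw [spGetLast_snoc]
                simp only [hc]
                omega
              · intro t ht
                rcases (show (t : ℤ) ≤ spPhi G₀ ℓ C₀ F₀ hm n v ∨
                    (t : ℤ) = spPhi G₀ ℓ C₀ F₀ hm (n + 1) u by omega) with h2 | h2
                · obtain ⟨b, hbmem, hbval⟩ := hvis t h2
                  exact ⟨b, hmem b hbmem, hbval⟩
                · exact ⟨c, by simp, by simp only [hc]; omega⟩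
    rcases key (m * (r - 1)) with hdone | hinv
    · exact hdone
    · exact absurd (hinv w).1 (by omega)


end P2601
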